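/- For every n ≥ 0 and every set U of at most n vertices of the complete multipartite graph K_{3,3,1,...,1} (two parts of size 3 and n parts of size 1), the induced subgraph on the complement of U contains a K_{3,3} minor; hence K_{3^2,1^n} is not n-apex. -/

import Mathlib

open SimpleGraph

/-- `H` is a minor of `G`: branch-set definition. -/
def IsMinor {W V : Type*} (H : SimpleGraph W) (G : SimpleGraph V) : Prop :=
  ∃ f : W → Set V,
    (∀ w, (f w).Nonempty) ∧
    (∀ w, (G.induce (f w)).Connected) ∧
    (Pairwise fun w₁ w₂ => Disjoint (f w₁) (f w₂)) ∧
    ∀ ⦃w₁ w₂⦄, H.Adj w₁ w₂ → ∃ v₁ ∈ f w₁, ∃ v₂ ∈ f w₂, G.Adj v₁ v₂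

/-- The complete graph on 5 vertices. -/
def K5 : SimpleGraph (Fin 5) := ⊤

/-- The complete bipartite graph `K_{3,3}`. -/
def K33 : SimpleGraph (Fin 3 ⊕ Fin 3) := completeBipartiteGraph (Fin 3) (Fin 3)

/-- Planarity in Wagner's form: no `K₅` minor and no `K_{3,3}` minor. -/
def IsPlanar {V : Type*} (G : SimpleGraph V) : Prop :=
  ¬ IsMinor K5 G ∧ ¬ IsMinor K33 G

/-- `G` is `n`-apex: some set of at most `n` vertices can be deleted to leave a planar graph. -/
def IsNApex {V : Type*} (G : SimpleGraph V) (n : ℕ) : Prop :=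
  ∃ U : Finset V, U.card ≤ n ∧ IsPlanar (G.induce (↑U : Set V)ᶜ)

/-- The complete multipartite graph `K_{3,3,1,…,1}` with two parts of size 3
and `n` singleton parts. -/
def KMulti (n : ℕ) : SimpleGraph (Fin 3 ⊕ Fin 3 ⊕ Fin n) :=
  SimpleGraph.fromRel (fun x y =>
    match x, y with
    | Sum.inl _, Sum.inl _ => False
    | Sum.inr (Sum.inl _), Sum.inr (Sum.inl _) => False
    | Sum.inr (Sum.inr i), Sum.inr (Sum.inr j) => i ≠ j
    | _, _ => True)

/-- For every `n` and every set `U` of at most `n` vertices of `K_{3²,1ⁿ}`,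
the induced subgraph on the complement of `U` has a `K_{3,3}` minor;
hence `K_{3²,1ⁿ}` is not `n`-apex. -/
theorem stmt_1 (n : ℕ) :
    (∀ U : Finset (Fin 3 ⊕ Fin 3 ⊕ Fin n), U.card ≤ n →
      IsMinor K33 ((KMulti n).induce (↑U : Set (Fin 3 ⊕ Fin 3 ⊕ Fin n))ᶜ)) ∧
    ¬ IsNApex (KMulti n) n := by
  classical
  have main : ∀ U : Finset (Fin 3 ⊕ Fin 3 ⊕ Fin n), U.card ≤ n →
      IsMinor K33 ((KMulti n).induce (↑U : Set (Fin 3 ⊕ Fin 3 ⊕ Fin n))ᶜ) := by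
    intro U hU
    let A : Finset (Fin 3 ⊕ Fin 3 ⊕ Fin n) := Finset.univ.image Sum.inl
    let B : Finset (Fin 3 ⊕ Fin 3 ⊕ Fin n) :=
      Finset.univ.image (fun i => Sum.inr (Sum.inl i))
    let C : Finset (Fin 3 ⊕ Fin 3 ⊕ Fin n) :=
      Finset.univ.image (fun i => Sum.inr (Sum.inr i))
    have hA : A.card = 3 := by
      simp [A, Finset.card_image_of_injective _ Sum.inl_injective]
    have hB : B.card = 3 := by
      have : Function.Injective
          (fun i : Fin 3 => (Sum.inr (Sum.inl i) : Fin 3 ⊕ Fin 3 ⊕ Fin n)) := by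
        intro i j h; simpa using h
      simp [B, Finset.card_image_of_injective _ this]
    have hC : C.card = n := by
      have : Function.Injective
          (fun i : Fin n => (Sum.inr (Sum.inr i) : Fin 3 ⊕ Fin 3 ⊕ Fin n)) := by
        intro i j h; simpa using h
      simp [C, Finset.card_image_of_injective _ this]
    -- partition of U
    have hpart : (U ∩ A) ∪ ((U ∩ B) ∪ (U ∩ C)) = U := by
      ext x
      rcases x with a | b | c <;> simp [A, B, C] <;> tauto
    have hdAB : Disjoint (U ∩ A) ((U ∩ B) ∪ (U ∩ C)) := by
      rw [Finset.disjoint_left]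
      rintro x hx hx'
      simp only [Finset.mem_inter, Finset.mem_union] at hx hx'
      obtain ⟨-, hxA⟩ := hx
      simp only [A, Finset.mem_image, Finset.mem_univ, true_and] at hxA
      obtain ⟨i, rfl⟩ := hxA
      rcases hx' with ⟨-, h⟩ | ⟨-, h⟩ <;>
        · simp only [B, C, Finset.mem_image, Finset.mem_univ, true_and] at h
          obtain ⟨a, ha⟩ := h
          cases ha
    have hdBC : Disjoint (U ∩ B) (U ∩ C) := by
      rw [Finset.disjoint_left]
      rintro x hx hx'
      simp only [Finset.mem_inter] at hx hx'
      obtain ⟨-, hxB⟩ := hx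
      simp only [B, Finset.mem_image, Finset.mem_univ, true_and] at hxB
      obtain ⟨i, rfl⟩ := hxB
      obtain ⟨-, h⟩ := hx'
      simp only [C, Finset.mem_image, Finset.mem_univ, true_and] at h
      obtain ⟨a, ha⟩ := h
      cases ha
    have hUsum : (U ∩ A).card + ((U ∩ B).card + (U ∩ C).card) = U.card := by
      rw [← Finset.card_union_of_disjoint hdBC, ← Finset.card_union_of_disjoint hdAB, hpart]
    -- counting leftovers
    have hAU : (A \ U).card + (U ∩ A).card = 3 := by
      have h1 : A \ U = A \ (U ∩ A) := by
        ext x; simp only [Finset.mem_sdiff, Finset.mem_inter]; tauto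
      have h2 := Finset.card_sdiff_add_card_eq_card (Finset.inter_subset_right : U ∩ A ⊆ A)
      rw [h1, h2, hA]
    have hBU : (B \ U).card + (U ∩ B).card = 3 := by
      have h1 : B \ U = B \ (U ∩ B) := by
        ext x; simp only [Finset.mem_sdiff, Finset.mem_inter]; tauto
      have h2 := Finset.card_sdiff_add_card_eq_card (Finset.inter_subset_right : U ∩ B ⊆ B)
      rw [h1, h2, hB]
    have hCU : (C \ U).card + (U ∩ C).card = n := by
      have h1 : C \ U = C \ (U ∩ C) := by
        ext x; simp only [Finset.mem_sdiff, Finset.mem_inter]; tauto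
      have h2 := Finset.card_sdiff_add_card_eq_card (Finset.inter_subset_right : U ∩ C ⊆ C)
      rw [h1, h2, hC]
    -- choose extra vertices from C
    obtain ⟨LC, hLCsub, hLCcard⟩ :=
      Finset.exists_subset_card_eq (s := C \ U) (n := (U ∩ A).card) (by omega)
    have hsd : ((C \ U) \ LC).card + LC.card = (C \ U).card :=
      Finset.card_sdiff_add_card_eq_card hLCsub
    obtain ⟨RC, hRCsub, hRCcard⟩ :=
      Finset.exists_subset_card_eq (s := (C \ U) \ LC) (n := (U ∩ B).card) (by omega)
    -- the branch vertex sets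
    let L : Finset (Fin 3 ⊕ Fin 3 ⊕ Fin n) := (A \ U) ∪ LC
    let R : Finset (Fin 3 ⊕ Fin 3 ⊕ Fin n) := (B \ U) ∪ RC
    have hACd : ∀ x ∈ A, x ∉ C := by
      intro x hx hx'
      simp only [A, Finset.mem_image, Finset.mem_univ, true_and] at hx
      obtain ⟨i, rfl⟩ := hx
      simp only [C, Finset.mem_image, Finset.mem_univ, true_and] at hx'
      obtain ⟨a, ha⟩ := hx'
      cases ha
    have hBCd : ∀ x ∈ B, x ∉ C := by
      intro x hx hx'
      simp only [B, Finset.mem_image, Finset.mem_univ, true_and] at hx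
      obtain ⟨i, rfl⟩ := hx
      simp only [C, Finset.mem_image, Finset.mem_univ, true_and] at hx'
      obtain ⟨a, ha⟩ := hx'
      cases ha
    have hABd : ∀ x ∈ A, x ∉ B := by
      intro x hx hx'
      simp only [A, Finset.mem_image, Finset.mem_univ, true_and] at hx
      obtain ⟨i, rfl⟩ := hx
      simp only [B, Finset.mem_image, Finset.mem_univ, true_and] at hx'
      obtain ⟨a, ha⟩ := hx'
      cases ha
    have hLcard : L.card = 3 := by
      have hd : Disjoint (A \ U) LC := by
        rw [Finset.disjoint_left]
        intro x hx hx'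
        exact hACd x (Finset.mem_sdiff.mp hx).1 (Finset.mem_sdiff.mp (hLCsub hx')).1
      rw [Finset.card_union_of_disjoint hd, hLCcard]
      omega
    have hRcard : R.card = 3 := by
      have hd : Disjoint (B \ U) RC := by
        rw [Finset.disjoint_left]
        intro x hx hx'
        exact hBCd x (Finset.mem_sdiff.mp hx).1
          (Finset.mem_sdiff.mp (Finset.mem_sdiff.mp (hRCsub hx')).1).1
      rw [Finset.card_union_of_disjoint hd, hRCcard]
      omega
    have hLR : Disjoint L R := by
      rw [Finset.disjoint_left]
      intro x hx hx'
      rcases Finset.mem_union.mp hx with hxA | hxC <;>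
        rcases Finset.mem_union.mp hx' with hyB | hyC
      · exact hABd x (Finset.mem_sdiff.mp hxA).1 (Finset.mem_sdiff.mp hyB).1
      · exact hACd x (Finset.mem_sdiff.mp hxA).1
          (Finset.mem_sdiff.mp (Finset.mem_sdiff.mp (hRCsub hyC)).1).1
      · exact hBCd x (Finset.mem_sdiff.mp hyB).1 (Finset.mem_sdiff.mp (hLCsub hxC)).1
      · exact (Finset.mem_sdiff.mp (hRCsub hyC)).2 hxC
    -- membership structure
    have hLmem : ∀ x ∈ L, x ∉ U ∧
        ((∃ i, x = Sum.inl i) ∨ (∃ i, x = Sum.inr (Sum.inr i))) := by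
      intro x hx
      rcases Finset.mem_union.mp hx with h | h
      · obtain ⟨hxA, hxU⟩ := Finset.mem_sdiff.mp h
        simp only [A, Finset.mem_image, Finset.mem_univ, true_and] at hxA
        obtain ⟨i, rfl⟩ := hxA
        exact ⟨hxU, Or.inl ⟨i, rfl⟩⟩
      · obtain ⟨hxC, hxU⟩ := Finset.mem_sdiff.mp (hLCsub h)
        simp only [C, Finset.mem_image, Finset.mem_univ, true_and] at hxC
        obtain ⟨i, rfl⟩ := hxC
        exact ⟨hxU, Or.inr ⟨i, rfl⟩⟩
    have hRmem : ∀ x ∈ R, x ∉ U ∧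
        ((∃ i, x = Sum.inr (Sum.inl i)) ∨ (∃ i, x = Sum.inr (Sum.inr i))) := by
      intro x hx
      rcases Finset.mem_union.mp hx with h | h
      · obtain ⟨hxB, hxU⟩ := Finset.mem_sdiff.mp h
        simp only [B, Finset.mem_image, Finset.mem_univ, true_and] at hxB
        obtain ⟨i, rfl⟩ := hxB
        exact ⟨hxU, Or.inl ⟨i, rfl⟩⟩
      · obtain ⟨hxC, hxU⟩ := Finset.mem_sdiff.mp (Finset.mem_sdiff.mp (hRCsub h)).1
        simp only [C, Finset.mem_image, Finset.mem_univ, true_and] at hxC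
        obtain ⟨i, rfl⟩ := hxC
        exact ⟨hxU, Or.inr ⟨i, rfl⟩⟩
    -- adjacency across L and R
    have adjLR : ∀ x ∈ L, ∀ y ∈ R, x ≠ y → (KMulti n).Adj x y := by
      intro x hx y hy hxy
      obtain ⟨-, hx2⟩ := hLmem x hx
      obtain ⟨-, hy2⟩ := hRmem y hy
      rcases hx2 with ⟨i, rfl⟩ | ⟨i, rfl⟩ <;> rcases hy2 with ⟨j, rfl⟩ | ⟨j, rfl⟩
      · simp [KMulti, SimpleGraph.fromRel_adj]
      · simp [KMulti, SimpleGraph.fromRel_adj]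
      · simp [KMulti, SimpleGraph.fromRel_adj]
      · have hij : i ≠ j := fun h => hxy (by rw [h])
        simp [KMulti, SimpleGraph.fromRel_adj, hij]
    -- the embedding
    have eL := L.equivFinOfCardEq hLcard
    have eR := R.equivFinOfCardEq hRcard
    let g : Fin 3 ⊕ Fin 3 → Fin 3 ⊕ Fin 3 ⊕ Fin n := fun w =>
      Sum.elim (fun i => ((eL.symm i : L) : Fin 3 ⊕ Fin 3 ⊕ Fin n))
        (fun i => ((eR.symm i : R) : Fin 3 ⊕ Fin 3 ⊕ Fin n)) w
    have hgL : ∀ i, g (Sum.inl i) ∈ L := fun i => (eL.symm i).2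
    have hgR : ∀ i, g (Sum.inr i) ∈ R := fun i => (eR.symm i).2
    have hgU : ∀ w, g w ∈ (↑U : Set (Fin 3 ⊕ Fin 3 ⊕ Fin n))ᶜ := by
      rintro (i | i)
      · exact (hLmem _ (hgL i)).1
      · exact (hRmem _ (hgR i)).1
    have hginj : Function.Injective g := by
      rintro (i | i) (j | j) h
      · have : eL.symm i = eL.symm j := Subtype.coe_injective h
        rw [eL.symm.injective this]
      · exact absurd (h ▸ hgL i) (Finset.disjoint_right.mp hLR (hgR j))
      · exact absurd (h ▸ hgR i) (Finset.disjoint_left.mp hLR (hgL j))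
      · have : eR.symm i = eR.symm j := Subtype.coe_injective h
        rw [eR.symm.injective this]
    let g' : Fin 3 ⊕ Fin 3 → ((↑U : Set (Fin 3 ⊕ Fin 3 ⊕ Fin n))ᶜ : Set _) :=
      fun w => ⟨g w, hgU w⟩
    have hg'inj : Function.Injective g' := by
      intro w₁ w₂ h
      exact hginj (congrArg Subtype.val h)
    refine ⟨fun w => {g' w}, fun w => ⟨g' w, rfl⟩, ?_, ?_, ?_⟩
    · intro w
      rw [SimpleGraph.connected_iff]
      refine ⟨?_, ⟨⟨g' w, rfl⟩⟩⟩
      intro a b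
      have hab : a = b := Subtype.ext (a.2.trans b.2.symm)
      exact hab ▸ SimpleGraph.Reachable.refl a
    · intro w₁ w₂ hne
      rw [Set.disjoint_singleton_left]
      simp only [Set.mem_singleton_iff]
      exact fun h => hne (hg'inj h)
    · intro w₁ w₂ hadj
      refine ⟨g' w₁, rfl, g' w₂, rfl, ?_⟩
      show (KMulti n).Adj (g w₁) (g w₂)
      rcases w₁ with i | i <;> rcases w₂ with j | j
      · simp [K33] at hadj
      · exact adjLR _ (hgL i) _ (hgR j) (fun h => by cases hginj h)
      · exact (adjLR _ (hgL j) _ (hgR i) (fun h => by cases hginj h)).symm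
      · simp [K33] at hadj
  refine ⟨main, ?_⟩
  rintro ⟨U, hU, hpl⟩
  exact hpl.2 (main U hU)
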